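/- Let A, P, Q be real n×n matrices satisfying the continuous algebraic Lyapunov equation Aᵀ P + P A + Q = 0, where P and Q are positive semidefinite and A + Aᵀ is negative definite. Then tr(Q)/(−λ_min(A + Aᵀ)) ≤ tr(P) ≤ tr(Q)/(−λ_max(A + Aᵀ)). -/

import Mathlib

open Matrix

/-- If `Aᵀ * P + P * A + Q = 0` (a CALE) with `P`, `Q` PSD and `A + Aᵀ`
negative definite, then `tr Q / (-λ_min(A+Aᵀ)) ≤ tr P ≤ tr Q / (-λ_max(A+Aᵀ))`. -/
theorem trace_bounds_of_CALE {n : ℕ} (hn : 0 < n)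
    (A P Q : Matrix (Fin n) (Fin n) ℝ)
    (hP : P.PosSemidef) (hQ : Q.PosSemidef)
    (hSym : (A + Aᵀ).IsHermitian)
    (hND : (-(A + Aᵀ)).PosDef)
    (heq : Aᵀ * P + P * A + Q = 0) :
    Q.trace / (-(⨅ i, hSym.eigenvalues i)) ≤ P.trace ∧
      P.trace ≤ Q.trace / (-(⨆ i, hSym.eigenvalues i)) := by
  haveI : Nonempty (Fin n) := ⟨⟨0, hn⟩⟩
  set S := A + Aᵀ with hS
  set U : Matrix (Fin n) (Fin n) ℝ := (hSym.eigenvectorUnitary : Matrix (Fin n) (Fin n) ℝ) with hU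
  set lam := hSym.eigenvalues with hlam
  -- eigenvalues are negative
  have hneg : ∀ i, lam i < 0 := by
    intro i
    have hv : (⇑(hSym.eigenvectorBasis i) : Fin n → ℝ) ≠ 0 := by
      intro h
      have := hSym.eigenvectorBasis.orthonormal.1 i
      rw [show (hSym.eigenvectorBasis i : EuclideanSpace ℝ (Fin n)) = 0 from
        by ext j; simpa using congrFun h j] at this
      simp at this
    have hpos := hND.dotProduct_mulVec_pos hv
    have := hSym.eigenvalues_eq i
    rw [hlam]
    rw [this]
    have hrw : dotProduct (star ⇑(hSym.eigenvectorBasis i)) ((-(S)) *ᵥ ⇑(hSym.eigenvectorBasis i))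
        = -(dotProduct (star ⇑(hSym.eigenvectorBasis i)) (S *ᵥ ⇑(hSym.eigenvectorBasis i))) := by
      rw [neg_mulVec, dotProduct_neg]
    rw [hrw] at hpos
    simp only [RCLike.re_to_real] at hpos ⊢
    linarith
  -- conjugated matrix
  set M : Matrix (Fin n) (Fin n) ℝ := star U * P * U with hM
  have hMpsd : M.PosSemidef := hP.conjTranspose_mul_mul_same U
  have hMdiag : ∀ i, 0 ≤ M i i := by
    intro i
    simpa [dotProduct, mulVec, Pi.single_apply, Finset.sum_ite_eq] using hMpsd.dotProduct_mulVec_nonneg (Pi.single i 1)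
  have hUstar : U * star U = 1 := by
    have := (Matrix.mem_unitaryGroup_iff).mp hSym.eigenvectorUnitary.2
    exact this
  have hMtr : M.trace = P.trace := by
    rw [hM, Matrix.trace_mul_cycle, hUstar, Matrix.one_mul]
  -- trace(S*P) = ∑ lam i * M i i
  have hSP : (S * P).trace = ∑ i, lam i * M i i := by
    have hspec := hSym.spectral_theorem
    calc (S * P).trace
        = (U * diagonal (RCLike.ofReal ∘ lam) * star U * P).trace := by exact congrArg (fun X => (X * P).trace) hspec
      _ = (diagonal (RCLike.ofReal ∘ lam) * (star U * P * U)).trace := by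
          rw [Matrix.mul_assoc, Matrix.mul_assoc, Matrix.trace_mul_comm, Matrix.mul_assoc]
      _ = ∑ i, lam i * M i i := by
          rw [Matrix.trace]
          simp [Matrix.diag, Matrix.diagonal_mul, hM]
  -- trace(S*P) + trace Q = 0
  have htr : (S * P).trace + Q.trace = 0 := by
    have := congrArg Matrix.trace heq
    simp only [Matrix.trace_add, Matrix.trace_zero] at this
    have h1 : (Aᵀ * P).trace = (P * Aᵀ).trace := Matrix.trace_mul_comm _ _
    have h2 : (S * P).trace = (A * P).trace + (Aᵀ * P).trace := by
      rw [hS, Matrix.add_mul, Matrix.trace_add]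
    have h3 : (P * A).trace = (A * P).trace := Matrix.trace_mul_comm _ _
    rw [h2]
    linarith
  set a := ⨅ i, lam i with ha
  set b := ⨆ i, lam i with hb
  have hbdd : BddAbove (Set.range lam) := Set.Finite.bddAbove (Set.finite_range _)
  have hbddb : BddBelow (Set.range lam) := Set.Finite.bddBelow (Set.finite_range _)
  have haleb : ∀ i, a ≤ lam i := fun i => ciInf_le hbddb i
  have hleb : ∀ i, lam i ≤ b := fun i => le_ciSup hbdd i
  have hb0 : b < 0 := by
    obtain ⟨j, hj⟩ := Finite.exists_max lam
    exact lt_of_le_of_lt (ciSup_le hj) (hneg j)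
  have ha0 : a < 0 := lt_of_le_of_lt (haleb (Classical.arbitrary _)) (hneg _)
  have htP : 0 ≤ P.trace := by
    rw [← hMtr, Matrix.trace]
    exact Finset.sum_nonneg fun i _ => hMdiag i
  -- bounds on trace(S*P)
  have hlow : a * P.trace ≤ (S * P).trace := by
    rw [hSP, ← hMtr, Matrix.trace, Finset.mul_sum]
    exact Finset.sum_le_sum fun i _ => mul_le_mul_of_nonneg_right (haleb i) (hMdiag i)
  have hhigh : (S * P).trace ≤ b * P.trace := by
    rw [hSP, ← hMtr, Matrix.trace, Finset.mul_sum]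
    exact Finset.sum_le_sum fun i _ => mul_le_mul_of_nonneg_right (hleb i) (hMdiag i)
  constructor
  · rw [div_le_iff₀ (by linarith : (0:ℝ) < -a)]
    nlinarith
  · rw [le_div_iff₀ (by linarith : (0:ℝ) < -b)]
    nlinarith
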